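/- Let Φ = (G, 𝕋, φ) be a complex unit gain graph with a perfect matching whose underlying graph G is connected, and let Φ ⊗ K₂ be its bipartite double. If 𝓔(Φ) = 2μ(G) then G ⊗ K₂ is disconnected; moreover G ⊗ K₂ has exactly two connected components, both isomorphic to G, and G is a complete bipartite graph. -/

import Mathlib

open Matrix

variable {V : Type*}

/-- A gain function on `G` with values in the circle group `𝕋 ⊆ ℂ`:
each ordered pair of adjacent vertices gets a unit complex number, and
reversing the pair inverts the gain. -/
structure IsGain (G : SimpleGraph V) (φ : V → V → ℂ) : Prop where
  unit : ∀ u v, G.Adj u v → ‖φ u v‖ = 1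
  inv : ∀ u v, G.Adj u v → φ v u = (φ u v)⁻¹

/-- The adjacency matrix of the complex unit gain graph `(G, 𝕋, φ)`. -/
noncomputable def gainAdj (G : SimpleGraph V) (φ : V → V → ℂ) : Matrix V V ℂ :=
  fun u v => @ite _ (G.Adj u v) (Classical.dec _) (φ u v) 0

theorem IsGain.isHermitian {G : SimpleGraph V} {φ : V → V → ℂ} (hg : IsGain G φ) :
    (gainAdj G φ).IsHermitian := by
  ext u v
  simp only [conjTranspose_apply, gainAdj]
  by_cases h : G.Adj u v
  · rw [if_pos h.symm, if_pos h, hg.inv u v h, Complex.inv_eq_conj (hg.unit u v h)]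
    simp
  · rw [if_neg (fun h' => h h'.symm), if_neg h]
    simp

/-- The energy of a complex unit gain graph: the sum of the absolute values of the
eigenvalues of its (Hermitian) adjacency matrix. -/
noncomputable def gainEnergy [Fintype V] [DecidableEq V] (G : SimpleGraph V) (φ : V → V → ℂ)
    (hg : IsGain G φ) : ℝ :=
  ∑ i, |hg.isHermitian.eigenvalues i|

/-- `M` is a matching of `G`: a set of edges of `G`, pairwise sharing no vertex. -/
def IsGraphMatching (G : SimpleGraph V) (M : Finset (Sym2 V)) : Prop :=
  (↑M : Set (Sym2 V)) ⊆ G.edgeSet ∧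
    ∀ e ∈ M, ∀ f ∈ M, e ≠ f → ∀ v : V, v ∈ e → v ∉ f

/-- The matching number of `G`: the largest size of a matching. -/
noncomputable def matchingNumber (G : SimpleGraph V) : ℕ :=
  sSup {n | ∃ M : Finset (Sym2 V), IsGraphMatching G M ∧ M.card = n}

/-- The gain of a walk: the product of the gains along its darts. -/
def walkGain {G : SimpleGraph V} (φ : V → V → ℂ) {u v : V} (w : G.Walk u v) : ℂ :=
  (w.darts.map fun d => φ d.toProd.1 d.toProd.2).prod

/-- A complex unit gain graph is balanced if every cycle has gain `1`. -/
def IsBalanced (G : SimpleGraph V) (φ : V → V → ℂ) : Prop :=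
  ∀ (v : V) (w : G.Walk v v), w.IsCycle → walkGain φ w = 1

theorem IsGain.anti {G H : SimpleGraph V} {φ : V → V → ℂ} (hg : IsGain G φ) (hle : H ≤ G) :
    IsGain H φ :=
  ⟨fun u v h => hg.unit u v (hle h), fun u v h => hg.inv u v (hle h)⟩

theorem IsGain.induce {G : SimpleGraph V} {φ : V → V → ℂ} (hg : IsGain G φ) (s : Set V) :
    IsGain (G.induce s) (fun a b => φ a b) :=
  ⟨fun u v h => hg.unit u v h, fun u v h => hg.inv u v h⟩

/-- The bipartite double `G ⊗ K₂` of a graph `G`: vertices `V × Bool`, with `(v, s)` adjacent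
to `(v', s')` exactly when `v` is adjacent to `v'` in `G` and `s ≠ s'`. -/
def bipartiteDouble (G : SimpleGraph V) : SimpleGraph (V × Bool) where
  Adj p q := G.Adj p.1 q.1 ∧ p.2 ≠ q.2
  symm := ⟨fun _ _ h => ⟨h.1.symm, h.2.symm⟩⟩
  loopless := ⟨fun _ h => h.2 rfl⟩

section SecA
variable {V : Type*}

private lemma matching_uniq {G : SimpleGraph V} {M : Finset (Sym2 V)}
    (hM : IsGraphMatching G M) :
    ∀ (v : V) (e f : Sym2 V), e ∈ M → f ∈ M → v ∈ e → v ∈ f → e = f := by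
  intro v e f he hf hve hvf
  by_contra hne
  exact hM.2 e he f hf hne v hve hvf

private lemma exists_matching_involution [DecidableEq V] {G : SimpleGraph V}
    {M : Finset (Sym2 V)} (hM : IsGraphMatching G M) (hcov : ∀ v : V, ∃ e ∈ M, v ∈ e) :
    ∃ m : V → V, (∀ v, G.Adj v (m v)) ∧ (∀ v, m (m v) = v) := by
  choose e he hve using hcov
  refine ⟨fun v => Sym2.Mem.other' (hve v), ?_, ?_⟩
  · intro v
    have h1 : s(v, Sym2.Mem.other' (hve v)) = e v := Sym2.other_spec' (hve v)
    have h2 : e v ∈ G.edgeSet := hM.1 (Finset.mem_coe.mpr (he v))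
    rw [← h1] at h2
    exact h2
  · intro v
    set w := Sym2.Mem.other' (hve v) with hw
    have h1 : s(v, w) = e v := Sym2.other_spec' (hve v)
    have hwe : w ∈ e v := by rw [← h1]; exact Sym2.mem_mk_right v w
    have hee : e w = e v := matching_uniq hM w _ _ (he w) (he v) (hve w) hwe
    have h2 : s(w, Sym2.Mem.other' (hve w)) = e w := Sym2.other_spec' (hve w)
    have h3 : s(w, Sym2.Mem.other' (hve w)) = s(w, v) := by
      rw [h2, hee, ← h1, Sym2.eq_swap]
    exact Sym2.congr_right.mp h3

private lemma matching_two_mul_card_le [Fintype V] [DecidableEq V] {G : SimpleGraph V}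
    {M : Finset (Sym2 V)} (hM : IsGraphMatching G M) : 2 * M.card ≤ Fintype.card V := by
  classical
  have hdisj : (M : Set (Sym2 V)).PairwiseDisjoint
      (fun e => Finset.univ.filter (· ∈ e)) := by
    intro e he f hf hne
    refine Finset.disjoint_left.mpr ?_
    intro v hv hv'
    exact hM.2 e he f hf hne v (by simpa using hv) (by simpa using hv')
  have hcard : ∀ e ∈ M, (Finset.univ.filter (· ∈ e)).card = 2 := by
    intro e he
    have hedge : e ∈ G.edgeSet := hM.1 (Finset.mem_coe.mpr he)
    induction e using Sym2.ind with
    | _ a b =>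
      have hab : a ≠ b := (G.mem_edgeSet.mp hedge).ne
      have hset : Finset.univ.filter (· ∈ s(a,b)) = {a, b} := by
        ext v; simp [Sym2.mem_iff]
      rw [hset, Finset.card_insert_of_notMem (by simp [hab]), Finset.card_singleton]
  calc 2 * M.card = ∑ e ∈ M, (Finset.univ.filter (· ∈ e)).card := by
        rw [Finset.sum_congr rfl hcard, Finset.sum_const, smul_eq_mul, mul_comm]
    _ = (M.biUnion fun e => Finset.univ.filter (· ∈ e)).card :=
        (Finset.card_biUnion (fun e he f hf hne => hdisj he hf hne)).symm
    _ ≤ Fintype.card V := Finset.card_le_univ _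

private lemma pm_two_mul_card [Fintype V] [DecidableEq V] {G : SimpleGraph V}
    {M : Finset (Sym2 V)} (hM : IsGraphMatching G M) (hcov : ∀ v : V, ∃ e ∈ M, v ∈ e) :
    2 * M.card = Fintype.card V := by
  classical
  have hdisj : ∀ e ∈ M, ∀ f ∈ M, e ≠ f →
      Disjoint (Finset.univ.filter (· ∈ e)) (Finset.univ.filter (· ∈ f)) := by
    intro e he f hf hne
    refine Finset.disjoint_left.mpr ?_
    intro v hv hv'
    exact hM.2 e he f hf hne v (by simpa using hv) (by simpa using hv')
  have hcard : ∀ e ∈ M, (Finset.univ.filter (· ∈ e)).card = 2 := by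
    intro e he
    have hedge : e ∈ G.edgeSet := hM.1 (Finset.mem_coe.mpr he)
    induction e using Sym2.ind with
    | _ a b =>
      have hab : a ≠ b := (G.mem_edgeSet.mp hedge).ne
      have hset : Finset.univ.filter (· ∈ s(a,b)) = {a, b} := by
        ext v; simp [Sym2.mem_iff]
      rw [hset, Finset.card_insert_of_notMem (by simp [hab]), Finset.card_singleton]
  have hbi : M.biUnion (fun e => Finset.univ.filter (· ∈ e)) = Finset.univ := by
    ext v
    simp only [Finset.mem_biUnion, Finset.mem_univ, iff_true, Finset.mem_filter, true_and]
    exact hcov v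
  calc 2 * M.card = ∑ e ∈ M, (Finset.univ.filter (· ∈ e)).card := by
        rw [Finset.sum_congr rfl hcard, Finset.sum_const, smul_eq_mul, mul_comm]
    _ = (M.biUnion fun e => Finset.univ.filter (· ∈ e)).card :=
        (Finset.card_biUnion hdisj).symm
    _ = Fintype.card V := by rw [hbi]; rfl

private lemma two_mul_matchingNumber [Fintype V] [DecidableEq V] {G : SimpleGraph V}
    {M : Finset (Sym2 V)} (hM : IsGraphMatching G M) (hcov : ∀ v : V, ∃ e ∈ M, v ∈ e) :
    2 * matchingNumber G = Fintype.card V := by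
  classical
  set S : Set ℕ := {n | ∃ M' : Finset (Sym2 V), IsGraphMatching G M' ∧ M'.card = n} with hS
  have hbdd : BddAbove S := by
    refine ⟨Fintype.card V, ?_⟩
    rintro n ⟨M', hM', rfl⟩
    have := matching_two_mul_card_le hM'
    omega
  have hmemM : M.card ∈ S := ⟨M, hM, rfl⟩
  have h1 : M.card ≤ sSup S := le_csSup hbdd hmemM
  have h2 : sSup S ∈ S := Nat.sSup_mem ⟨M.card, hmemM⟩ hbdd
  obtain ⟨M', hM', hcard'⟩ := h2
  have h3 : 2 * sSup S ≤ Fintype.card V := by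
    rw [← hcard']; exact matching_two_mul_card_le hM'
  have h4 : 2 * M.card = Fintype.card V := pm_two_mul_card hM hcov
  have : matchingNumber G = sSup S := rfl
  omega

end SecA
section SecB
set_option linter.unusedSectionVars false
variable {V : Type*}

private noncomputable def Bmat [DecidableEq V] (φ : V → V → ℂ) (m : V → V) : Matrix V V ℂ :=
  Matrix.of fun u v => if v = m u then φ u (m u) else 0

variable [Fintype V] [DecidableEq V] {G : SimpleGraph V} {φ : V → V → ℂ}
  {m : V → V}

private lemma Bmat_apply (φ : V → V → ℂ) (m : V → V) (u v : V) :
    Bmat φ m u v = if v = m u then φ u (m u) else 0 := rfl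

private lemma phi_unit_ne (hg : IsGain G φ) (hmadj : ∀ v, G.Adj v (m v)) (v : V) :
    φ v (m v) ≠ 0 := by
  intro h
  have := hg.unit v (m v) (hmadj v)
  rw [h] at this
  simp at this

private lemma phi_mul_phi (hg : IsGain G φ) (hmadj : ∀ v, G.Adj v (m v)) (v : V) :
    φ v (m v) * φ (m v) v = 1 := by
  rw [hg.inv v (m v) (hmadj v)]
  exact mul_inv_cancel₀ (phi_unit_ne hg hmadj v)

private lemma Bmat_mul_self (hg : IsGain G φ) (hmadj : ∀ v, G.Adj v (m v))
    (hminv : ∀ v, m (m v) = v) : Bmat φ m * Bmat φ m = 1 := by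
  ext u w
  rw [Matrix.mul_apply]
  have hsum : ∀ v : V, Bmat φ m u v * Bmat φ m v w
      = if v = m u then φ u (m u) * Bmat φ m (m u) w else 0 := by
    intro v
    rw [Bmat_apply]
    by_cases h : v = m u
    · rw [if_pos h, if_pos h, h]
    · rw [if_neg h, if_neg h, zero_mul]
  rw [Finset.sum_congr rfl (fun v _ => hsum v), Finset.sum_ite_eq' Finset.univ (m u),
    if_pos (Finset.mem_univ _), Bmat_apply, hminv u]
  by_cases h : w = u
  · rw [if_pos h, h, Matrix.one_apply_eq]
    exact phi_mul_phi hg hmadj u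
  · rw [if_neg h, mul_zero, Matrix.one_apply_ne (fun hh => h hh.symm)]

private lemma Bmat_isHermitian (hg : IsGain G φ) (hmadj : ∀ v, G.Adj v (m v))
    (hminv : ∀ v, m (m v) = v) : (Bmat φ m).IsHermitian := by
  ext u v
  rw [Matrix.conjTranspose_apply, Bmat_apply, Bmat_apply]
  by_cases h : u = m v
  · rw [if_pos h]
    have h' : v = m u := by rw [h, hminv]
    rw [if_pos h']
    have hvu : φ u (m u) = φ (m v) v := by rw [h]; congr 1; exact hminv v
    rw [hvu, hg.inv v (m v) (hmadj v), Complex.inv_eq_conj (hg.unit v (m v) (hmadj v))]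
    simp
  · rw [if_neg h]
    have h' : ¬ (v = m u) := fun hh => h (by rw [hh, hminv])
    rw [if_neg h']
    simp

private lemma Bmat_mem_unitaryGroup (hg : IsGain G φ) (hmadj : ∀ v, G.Adj v (m v))
    (hminv : ∀ v, m (m v) = v) : Bmat φ m ∈ Matrix.unitaryGroup V ℂ := by
  rw [Matrix.mem_unitaryGroup_iff, Matrix.star_eq_conjTranspose,
    (Bmat_isHermitian hg hmadj hminv)]
  exact Bmat_mul_self hg hmadj hminv

private lemma gainAdj_apply_of_adj {G : SimpleGraph V} {φ : V → V → ℂ} {u v : V}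
    (h : G.Adj u v) : gainAdj G φ u v = φ u v := if_pos h

private lemma gainAdj_apply_of_not_adj {G : SimpleGraph V} {φ : V → V → ℂ} {u v : V}
    (h : ¬ G.Adj u v) : gainAdj G φ u v = 0 := if_neg h

private lemma trace_gainAdj_mul_Bmat (hg : IsGain G φ) (hmadj : ∀ v, G.Adj v (m v))
    (hminv : ∀ v, m (m v) = v) :
    Matrix.trace (gainAdj G φ * Bmat φ m) = (Fintype.card V : ℂ) := by
  have hdiag : ∀ u : V, (gainAdj G φ * Bmat φ m) u u = 1 := by
    intro u
    rw [Matrix.mul_apply]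
    have hsum : ∀ v : V, gainAdj G φ u v * Bmat φ m v u
        = if v = m u then gainAdj G φ u (m u) * φ (m u) u else 0 := by
      intro v
      rw [Bmat_apply]
      by_cases h : v = m u
      · rw [if_pos h]
        have h2 : u = m v := by rw [h, hminv]
        rw [if_pos h2, h]
        congr 2
        rw [hminv]
      · rw [if_neg h]
        have h2 : ¬ (u = m v) := fun hh => h (by rw [hh, hminv])
        rw [if_neg h2, mul_zero]
    rw [Finset.sum_congr rfl (fun v _ => hsum v), Finset.sum_ite_eq' Finset.univ (m u),
      if_pos (Finset.mem_univ _), gainAdj_apply_of_adj (hmadj u)]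
    exact phi_mul_phi hg hmadj u
  rw [Matrix.trace]
  rw [Finset.sum_congr rfl (fun u _ => by rw [Matrix.diag_apply, hdiag u])]
  rw [Finset.sum_const, Finset.card_univ, nsmul_eq_mul, mul_one]

end SecB
section SecC
set_option linter.unusedSectionVars false
open scoped ComplexOrder
variable {V : Type*} [Fintype V] [DecidableEq V]

set_option maxHeartbeats 1000000 in
private lemma key_psd (G : SimpleGraph V) (φ : V → V → ℂ) (hg : IsGain G φ)
    (B : Matrix V V ℂ) (hBu : B ∈ Matrix.unitaryGroup V ℂ)
    (htr : Matrix.trace (gainAdj G φ * B) = (Fintype.card V : ℂ))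
    (hEn : ∑ i, |hg.isHermitian.eigenvalues i| = (Fintype.card V : ℝ)) :
    B * gainAdj G φ
      = (hg.isHermitian.eigenvectorUnitary : Matrix V V ℂ)
        * Matrix.diagonal (fun i => ((|hg.isHermitian.eigenvalues i| : ℝ) : ℂ))
        * star (hg.isHermitian.eigenvectorUnitary : Matrix V V ℂ) := by
  have hA := hg.isHermitian
  set U : Matrix V V ℂ := (hA.eigenvectorUnitary : Matrix V V ℂ) with hUdef
  set lam : V → ℝ := hA.eigenvalues with hlam
  set Lam : Matrix V V ℂ := Matrix.diagonal (RCLike.ofReal ∘ lam) with hLam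
  have hU1 : U * star U = 1 := Matrix.mem_unitaryGroup_iff.mp hA.eigenvectorUnitary.2
  have hU2 : star U * U = 1 := Matrix.mem_unitaryGroup_iff'.mp hA.eigenvectorUnitary.2
  have hB1 : B * star B = 1 := Matrix.mem_unitaryGroup_iff.mp hBu
  have hB2 : star B * B = 1 := Matrix.mem_unitaryGroup_iff'.mp hBu
  have hspec : gainAdj G φ = U * Lam * star U := hA.spectral_theorem
  set D : Matrix V V ℂ := star U * B * U with hD
  -- D is unitary
  have hDstar : star D = star U * (star B * U) := by
    rw [hD, Matrix.star_mul, Matrix.star_mul, star_star]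
  have hDunit : star D * D = 1 := by
    rw [hDstar, hD]
    calc star U * (star B * U) * (star U * B * U)
        = star U * (star B * ((U * star U) * (B * U))) := by
          simp only [mul_assoc]
      _ = star U * (star B * (B * U)) := by rw [hU1, one_mul]
      _ = star U * ((star B * B) * U) := by simp only [mul_assoc]
      _ = star U * U := by rw [hB2, one_mul]
      _ = 1 := hU2
  -- trace identity
  have htrLD : Matrix.trace (Lam * D) = (Fintype.card V : ℂ) := by
    rw [← htr, hspec]
    symm
    calc Matrix.trace (U * Lam * star U * B)
        = Matrix.trace ((U * Lam) * (star U * B)) := by rw [mul_assoc]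
      _ = Matrix.trace ((star U * B) * (U * Lam)) := Matrix.trace_mul_comm _ _
      _ = Matrix.trace ((star U * B * U) * Lam) := by simp only [mul_assoc]
      _ = Matrix.trace (Lam * (star U * B * U)) := Matrix.trace_mul_comm _ _
  have hcast : ∀ r : ℝ, (RCLike.ofReal r : ℂ) = (r : ℂ) := fun r =>
    congrFun Complex.coe_algebraMap r
  have hsum : ∑ i, (lam i : ℂ) * D i i = (Fintype.card V : ℂ) := by
    rw [← htrLD, Matrix.trace]
    apply Finset.sum_congr rfl
    intro i _
    rw [Matrix.diag_apply, hLam, Matrix.diagonal_mul, Function.comp_apply, hcast]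
  -- column norms of D
  have hcol : ∀ j, ∑ k, Complex.normSq (D k j) = 1 := by
    intro j
    have h1 : (star D * D) j j = 1 := by rw [hDunit, Matrix.one_apply_eq]
    rw [Matrix.mul_apply] at h1
    have h2 : ∀ k, (star D) j k * D k j = (Complex.normSq (D k j) : ℂ) := by
      intro k
      rw [Matrix.star_apply, Complex.normSq_eq_conj_mul_self]
      rfl
    rw [Finset.sum_congr rfl (fun k _ => h2 k)] at h1
    have h3 : ((∑ k, Complex.normSq (D k j) : ℝ) : ℂ) = ((1 : ℝ) : ℂ) := by
      rw [Complex.ofReal_sum]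
      simpa using h1
    exact_mod_cast h3
  -- real part sum
  have hre : ∑ i, lam i * (D i i).re = (Fintype.card V : ℝ) := by
    have := congrArg Complex.re hsum
    rw [Complex.re_sum] at this
    simpa using this
  -- termwise bound
  have habsD : ∀ i, ‖D i i‖ ≤ 1 := by
    intro i
    have h1 : Complex.normSq (D i i) ≤ 1 := by
      calc Complex.normSq (D i i) ≤ ∑ k, Complex.normSq (D k i) :=
            Finset.single_le_sum (f := fun k => Complex.normSq (D k i))
              (fun k _ => Complex.normSq_nonneg _) (Finset.mem_univ i)
        _ = 1 := hcol i
    have h2 : (‖D i i‖) ^ 2 ≤ 1 := by rw [Complex.sq_norm]; exact h1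
    nlinarith [norm_nonneg (D i i)]
  have hterm : ∀ i, lam i * (D i i).re ≤ |lam i| := by
    intro i
    have h1 : |(D i i).re| ≤ 1 := (Complex.abs_re_le_norm _).trans (habsD i)
    calc lam i * (D i i).re ≤ |lam i * (D i i).re| := le_abs_self _
      _ = |lam i| * |(D i i).re| := abs_mul _ _
      _ ≤ |lam i| * 1 := by
          exact mul_le_mul_of_nonneg_left h1 (abs_nonneg _)
      _ = |lam i| := mul_one _
  have heach : ∀ i, lam i * (D i i).re = |lam i| := by
    have hsums : ∑ i, lam i * (D i i).re = ∑ i, |lam i| := by rw [hre, hEn]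
    intro i
    exact (Finset.sum_eq_sum_iff_of_le (fun i _ => hterm i)).mp hsums i (Finset.mem_univ i)
  -- column structure of D at nonzero eigenvalues
  have hDcol : ∀ j, lam j ≠ 0 → ∀ k, D k j = if k = j then ((|lam j| / lam j : ℝ) : ℂ) else 0 := by
    intro j hj
    have hrej : (D j j).re = |lam j| / lam j := by
      field_simp
      rw [mul_comm]
      exact heach j
    have hre2 : (D j j).re ^ 2 = 1 := by
      rw [hrej, div_pow, sq_abs, div_self (pow_ne_zero 2 hj)]
    have hns_le : Complex.normSq (D j j) ≤ 1 := by
      calc Complex.normSq (D j j) ≤ ∑ k, Complex.normSq (D k j) :=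
            Finset.single_le_sum (f := fun k => Complex.normSq (D k j))
              (fun k _ => Complex.normSq_nonneg _) (Finset.mem_univ j)
        _ = 1 := hcol j
    have him : (D j j).im = 0 := by
      have h1 : Complex.normSq (D j j) = (D j j).re ^ 2 + (D j j).im ^ 2 := by
        rw [Complex.normSq_apply]; ring
      nlinarith [sq_nonneg (D j j).im]
    have hns_eq : Complex.normSq (D j j) = 1 := by
      rw [Complex.normSq_apply, him]
      nlinarith [hre2]
    have hrest : ∑ k ∈ Finset.univ.erase j, Complex.normSq (D k j) = 0 := by
      have := hcol j
      rw [← Finset.add_sum_erase Finset.univ _ (Finset.mem_univ j), hns_eq] at this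
      linarith
    intro k
    by_cases hk : k = j
    · subst hk
      rw [if_pos rfl]
      apply Complex.ext
      · simp [hrej]
      · simp [him]
    · rw [if_neg hk]
      have hzero : Complex.normSq (D k j) = 0 := by
        have hmem : k ∈ Finset.univ.erase j := Finset.mem_erase.mpr ⟨hk, Finset.mem_univ k⟩
        have := (Finset.sum_eq_zero_iff_of_nonneg
          (fun k _ => Complex.normSq_nonneg (D k j))).mp hrest k hmem
        exact this
      exact Complex.normSq_eq_zero.mp hzero
  -- D * Lam = |Lam|
  have hDL : D * Lam = Matrix.diagonal (fun i => ((|lam i| : ℝ) : ℂ)) := by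
    ext k j
    rw [hLam, Matrix.mul_diagonal, Matrix.diagonal_apply]
    rw [Function.comp_apply, hcast]
    by_cases hj : lam j = 0
    · simp only [Function.comp_apply, hj]
      by_cases hk : k = j <;> simp [hk, hj]
    · by_cases hk : k = j
      · subst hk
        rw [hDcol k hj k, if_pos rfl, if_pos rfl, ← Complex.ofReal_mul]
        exact congrArg Complex.ofReal (div_mul_cancel₀ _ hj)
      · rw [hDcol j hj k, if_neg hk, if_neg hk, zero_mul]
  -- conclude
  have hBU : B * U = U * D := by
    rw [hD]
    calc B * U = 1 * (B * U) := (one_mul _).symm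
      _ = (U * star U) * (B * U) := by rw [hU1]
      _ = U * (star U * B * U) := by simp only [mul_assoc]
  calc B * gainAdj G φ = B * (U * Lam * star U) := by rw [← hspec]
    _ = ((B * U) * Lam) * star U := by simp only [mul_assoc]
    _ = ((U * D) * Lam) * star U := by rw [hBU]
    _ = (U * (D * Lam)) * star U := by simp only [mul_assoc]
    _ = U * Matrix.diagonal (fun i => ((|lam i| : ℝ) : ℂ)) * star U := by rw [hDL]

private lemma key_psd' (G : SimpleGraph V) (φ : V → V → ℂ) (hg : IsGain G φ)
    (B : Matrix V V ℂ) (hBu : B ∈ Matrix.unitaryGroup V ℂ)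
    (htr : Matrix.trace (gainAdj G φ * B) = (Fintype.card V : ℂ))
    (hEn : ∑ i, |hg.isHermitian.eigenvalues i| = (Fintype.card V : ℝ)) :
    (B * gainAdj G φ).PosSemidef := by
  rw [key_psd G φ hg B hBu htr hEn]
  have hdiag : (Matrix.diagonal (fun i => ((|hg.isHermitian.eigenvalues i| : ℝ) : ℂ))).PosSemidef := by
    rw [Matrix.posSemidef_diagonal_iff]
    intro i
    rw [Complex.zero_le_real]
    exact abs_nonneg _
  have := hdiag.mul_mul_conjTranspose_same (hg.isHermitian.eigenvectorUnitary : Matrix V V ℂ)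
  rwa [← Matrix.star_eq_conjTranspose] at this

end SecC
section SecD
set_option linter.unusedSectionVars false
set_option maxHeartbeats 1000000
open scoped ComplexOrder
variable {V : Type*} [Fintype V] [DecidableEq V]

private lemma exists_bipartition (G : SimpleGraph V) (φ : V → V → ℂ) (hg : IsGain G φ)
    (hconn : G.Connected)
    (hpm : ∃ M : Finset (Sym2 V), IsGraphMatching G M ∧ ∀ v : V, ∃ e ∈ M, v ∈ e)
    (hE : gainEnergy G φ hg = 2 * (matchingNumber G : ℝ)) :
    ∃ p : V → Prop, ∀ u v, G.Adj u v ↔ (p u ↔ ¬ p v) := by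
  classical
  obtain ⟨M, hM, hcov⟩ := hpm
  obtain ⟨m, hmadj, hminv⟩ := exists_matching_involution hM hcov
  -- energy equals |V|
  have hEn : ∑ i, |hg.isHermitian.eigenvalues i| = (Fintype.card V : ℝ) := by
    have h2 := two_mul_matchingNumber hM hcov
    have : gainEnergy G φ hg = (Fintype.card V : ℝ) := by
      rw [hE]
      rw [← h2]
      push_cast
      ring
    rw [← this]
    rfl
  have hC : (Bmat φ m * gainAdj G φ).PosSemidef :=
    key_psd' G φ hg (Bmat φ m) (Bmat_mem_unitaryGroup hg hmadj hminv)
      (trace_gainAdj_mul_Bmat hg hmadj hminv) hEn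
  set C : Matrix V V ℂ := Bmat φ m * gainAdj G φ with hCdef
  -- entries of C
  have hCent : ∀ u v, C u v = φ u (m u) * gainAdj G φ (m u) v := by
    intro u v
    rw [hCdef, Matrix.mul_apply]
    have hsum : ∀ w : V, Bmat φ m u w * gainAdj G φ w v
        = if w = m u then φ u (m u) * gainAdj G φ (m u) v else 0 := by
      intro w
      rw [Bmat_apply]
      by_cases h : w = m u
      · rw [if_pos h, if_pos h, h]
      · rw [if_neg h, if_neg h, zero_mul]
    rw [Finset.sum_congr rfl (fun w _ => hsum w), Finset.sum_ite_eq' Finset.univ (m u),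
      if_pos (Finset.mem_univ _)]
  have hCadj : ∀ u v, C u v ≠ 0 ↔ G.Adj (m u) v := by
    intro u v
    rw [hCent]
    constructor
    · intro h
      by_contra hadj
      rw [gainAdj_apply_of_not_adj hadj, mul_zero] at h
      exact h rfl
    · intro hadj
      rw [gainAdj_apply_of_adj hadj]
      exact mul_ne_zero (phi_unit_ne hg hmadj u) (by
        intro h0
        have := hg.unit (m u) v hadj
        rw [h0] at this
        simp at this)
  have hCmadj : ∀ u v, C (m u) v ≠ 0 ↔ G.Adj u v := by
    intro u v
    rw [hCadj, hminv]
  have hCuu : ∀ u, C u u = 1 := by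
    intro u
    rw [hCent, gainAdj_apply_of_adj ((hmadj u).symm)]
    exact phi_mul_phi hg hmadj u
  have hConj : ∀ u v, C v u = (starRingEnd ℂ) (C u v) := by
    intro u v
    conv_lhs => rw [← hC.1]
    rw [Matrix.conjTranspose_apply]
    rfl
  have hsymne : ∀ u v, C u v ≠ 0 → C v u ≠ 0 := by
    intro u v h
    rw [hConj]
    simpa using h
  have habs1 : ∀ u v, C u v ≠ 0 → ‖C u v‖ = 1 := by
    intro u v h
    have hadj := (hCadj u v).mp h
    rw [hCent, norm_mul, hg.unit u (m u) (hmadj u), one_mul,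
      gainAdj_apply_of_adj hadj]
    exact hg.unit (m u) v hadj
  have hunit : ∀ u v, C u v ≠ 0 → (starRingEnd ℂ) (C u v) * C u v = 1 := by
    intro u v h
    have h1 : ‖C u v‖ = 1 := habs1 u v h
    calc (starRingEnd ℂ) (C u v) * C u v = (Complex.normSq (C u v) : ℂ) :=
          (Complex.normSq_eq_conj_mul_self).symm
      _ = 1 := by rw [Complex.normSq_eq_norm_sq, h1]; norm_num
  -- Gram vectors
  set R : Matrix V V ℂ := (by open scoped MatrixOrder in exact CFC.sqrt C) with hRdef
  have hRmul : R * R = C := by open scoped MatrixOrder in exact CFC.sqrt_mul_sqrt_self C hC.nonneg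
  have hRH : Rᴴ = R := by open scoped MatrixOrder in exact (CFC.sqrt_nonneg C).posSemidef.1
  have hip : ∀ u v, ∑ k, (starRingEnd ℂ) (R k u) * R k v = C u v := by
    intro u v
    have h1 : (Rᴴ * R) u v = C u v := by rw [hRH, hRmul]
    rw [← h1, Matrix.mul_apply]
    apply Finset.sum_congr rfl
    intro k _
    rw [Matrix.conjTranspose_apply]
    rfl
  have hpar : ∀ u v, C u v ≠ 0 → ∀ k, R k v = C u v * R k u := by
    intro u v hne
    have hzero : ∑ k, Complex.normSq (R k v - C u v * R k u) = 0 := by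
      have hexp : ∀ k, (Complex.normSq (R k v - C u v * R k u) : ℂ)
          = ((starRingEnd ℂ) (R k v) * R k v)
            - (starRingEnd ℂ) (C u v) * ((starRingEnd ℂ) (R k u) * R k v)
            - C u v * ((starRingEnd ℂ) (R k v) * R k u)
            + ((starRingEnd ℂ) (C u v) * C u v) * ((starRingEnd ℂ) (R k u) * R k u) := by
        intro k
        rw [Complex.normSq_eq_conj_mul_self, map_sub, _root_.map_mul]
        ring
      have h1 : (starRingEnd ℂ) (C u v) * C u v = 1 := hunit u v hne
      have h2 : C u v * (starRingEnd ℂ) (C u v) = 1 := by rw [mul_comm]; exact h1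
      have hsC : ((∑ k, Complex.normSq (R k v - C u v * R k u) : ℝ) : ℂ) = 0 := by
        rw [Complex.ofReal_sum, Finset.sum_congr rfl (fun k _ => hexp k),
          Finset.sum_add_distrib, Finset.sum_sub_distrib, Finset.sum_sub_distrib,
          ← Finset.mul_sum, ← Finset.mul_sum, ← Finset.mul_sum,
          hip v v, hip u v, hip v u, hip u u, hCuu u, hCuu v,
          hConj u v]
        linear_combination -h1
      exact_mod_cast hsC
    intro k
    have h0 := (Finset.sum_eq_zero_iff_of_nonneg
      (fun k _ => Complex.normSq_nonneg _)).mp hzero k (Finset.mem_univ k)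
    exact sub_eq_zero.mp (Complex.normSq_eq_zero.mp h0)
  have htrans : ∀ a b c, C a b ≠ 0 → C a c ≠ 0 → C b c ≠ 0 := by
    intro a b c hab hac
    have h1 : C b c = (starRingEnd ℂ) (C a b) * C a c := by
      have hterm : ∀ k, (starRingEnd ℂ) (R k b) * R k c
          = ((starRingEnd ℂ) (C a b) * C a c) * ((starRingEnd ℂ) (R k a) * R k a) := by
        intro k
        rw [hpar a b hab k, hpar a c hac k, _root_.map_mul]
        ring
      rw [← hip b c, Finset.sum_congr rfl (fun k _ => hterm k), ← Finset.mul_sum,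
        hip a a, hCuu a, mul_one]
    rw [h1]
    exact mul_ne_zero (by simpa using hab) hac
  -- swap lemma
  have hadjswap : ∀ u v, G.Adj (m u) v ↔ G.Adj u (m v) := by
    intro u v
    constructor
    · intro h
      have h1 : C u v ≠ 0 := (hCadj u v).mpr h
      have h2 : C v u ≠ 0 := hsymne _ _ h1
      have h3 := (hCadj v u).mp h2
      exact h3.symm
    · intro h
      have h1 : C v u ≠ 0 := (hCadj v u).mpr h.symm
      have h2 : C u v ≠ 0 := hsymne _ _ h1
      exact (hCadj u v).mp h2
  have hswap : ∀ u v, C u v ≠ 0 ↔ C (m u) (m v) ≠ 0 := by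
    intro u v
    rw [hCadj, hCadj, hminv]
    exact hadjswap u v
  -- the bipartition
  have hne : Nonempty V := hconn.nonempty
  set u₀ : V := Classical.arbitrary V with hu₀
  set p : V → Prop := fun v => C u₀ v ≠ 0 with hp
  have hpu₀ : p u₀ := by
    show C u₀ u₀ ≠ 0
    rw [hCuu]
    exact one_ne_zero
  have hstep : ∀ a b, G.Adj a b → (C u₀ a ≠ 0 ∨ C (m u₀) a ≠ 0)
      → (C u₀ b ≠ 0 ∨ C (m u₀) b ≠ 0) := by
    intro a b hab hor
    have hmab : C (m a) b ≠ 0 := (hCmadj a b).mpr hab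
    rcases hor with ha | ha
    · right
      have h1 : C (m u₀) (m a) ≠ 0 := (hswap u₀ a).mp ha
      exact htrans (m a) (m u₀) b (hsymne _ _ h1) hmab
    · left
      have h1 : C u₀ (m a) ≠ 0 := by
        have := (hswap (m u₀) a).mp ha
        rwa [hminv] at this
      exact htrans (m a) u₀ b (hsymne _ _ h1) hmab
  have hcover : ∀ v, C u₀ v ≠ 0 ∨ C (m u₀) v ≠ 0 := by
    have hwalk : ∀ (a v : V), G.Walk a v → (C u₀ a ≠ 0 ∨ C (m u₀) a ≠ 0)
        → (C u₀ v ≠ 0 ∨ C (m u₀) v ≠ 0) := by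
      intro a v w
      induction w with
      | nil => exact id
      | cons h pw ih => exact fun ha => ih (hstep _ _ h ha)
    intro v
    obtain ⟨w⟩ := hconn.preconnected u₀ v
    exact hwalk u₀ v w (Or.inl (by rw [hCuu]; exact one_ne_zero))
  have hdisj : ∀ v, ¬ (C u₀ v ≠ 0 ∧ C (m u₀) v ≠ 0) := by
    rintro v ⟨h1, h2⟩
    have h3 : C u₀ (m u₀) ≠ 0 := htrans v u₀ (m u₀) (hsymne _ _ h1) (hsymne _ _ h2)
    have h4 := (hCadj u₀ (m u₀)).mp h3
    exact G.irrefl h4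
  refine ⟨p, ?_⟩
  intro u v
  constructor
  · intro hadj
    have hmuv : C (m u) v ≠ 0 := (hCmadj u v).mpr hadj
    constructor
    · intro hpu hpv
      have h1 : C (m u₀) (m u) ≠ 0 := (hswap u₀ u).mp hpu
      have h2 : C (m u₀) v ≠ 0 := htrans (m u) (m u₀) v (hsymne _ _ h1) hmuv
      exact hdisj v ⟨hpv, h2⟩
    · intro hnpv
      by_contra hnpu
      have hq : C (m u₀) u ≠ 0 := (hcover u).resolve_left (fun hc => hc hnpu)
      have h1 : C u₀ (m u) ≠ 0 := by
        have := (hswap (m u₀) u).mp hq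
        rwa [hminv] at this
      have h2 : C u₀ v ≠ 0 := htrans (m u) u₀ v (hsymne _ _ h1) hmuv
      exact hnpv h2
  · intro hiff
    by_cases hpu : p u
    · have hnpv : ¬ p v := hiff.mp hpu
      have hqv : C (m u₀) v ≠ 0 := (hcover v).resolve_left hnpv
      have h1 : C (m u₀) (m u) ≠ 0 := (hswap u₀ u).mp hpu
      have h2 : C (m u) v ≠ 0 := htrans (m u₀) (m u) v h1 hqv
      exact (hCmadj u v).mp h2
    · have hpv : p v := by
        by_contra hnpv
        exact hpu (hiff.mpr (fun hp => hp hnpv))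
      have hq : C (m u₀) u ≠ 0 := (hcover u).resolve_left hpu
      have h1 : C u₀ (m u) ≠ 0 := by
        have := (hswap (m u₀) u).mp hq
        rwa [hminv] at this
      have h2 : C (m u) v ≠ 0 := htrans u₀ (m u) v h1 hpv
      exact (hCmadj u v).mp h2

end SecD
section SecE
set_option linter.unusedSectionVars false
set_option maxHeartbeats 1000000
variable {V : Type*} [Fintype V] [DecidableEq V]

private lemma not_connected_bipartiteDouble' {G : SimpleGraph V} {p : V → Prop}
    (hne : Nonempty V)
    (hchar : ∀ u v, G.Adj u v ↔ (p u ↔ ¬ p v)) :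
    ¬ (bipartiteDouble G).Connected := by
  classical
  intro hc
  set f : V × Bool → Prop := fun x => (p x.1 ↔ x.2 = true) with hf
  have hinv : ∀ x y : V × Bool, (bipartiteDouble G).Adj x y → (f x ↔ f y) := by
    rintro ⟨a, ba⟩ ⟨c, bc⟩ ⟨hadj, hb⟩
    have h1 : p a ↔ ¬ p c := (hchar _ _).mp hadj
    simp only [hf]
    cases ba <;> cases bc <;> simp_all
  have hwalkinv : ∀ x y, (bipartiteDouble G).Walk x y → (f x ↔ f y) := by
    intro x y w
    induction w with
    | nil => exact Iff.rfl
    | cons h pw ih => exact (hinv _ _ h).trans ih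
  obtain ⟨u⟩ := hne
  obtain ⟨w⟩ := hc.preconnected (u, true) (u, false)
  have hiff := hwalkinv _ _ w
  simp only [hf] at hiff
  simp at hiff

private lemma double_iso_sum' {G : SimpleGraph V} {p : V → Prop}
    (hchar : ∀ u v, G.Adj u v ↔ (p u ↔ ¬ p v)) :
    Nonempty (bipartiteDouble G ≃g (G ⊕g G)) := by
  classical
  have hPP : ∀ u v, p u → p v → ¬ G.Adj u v :=
    fun u v hu hv hadj => ((hchar u v).mp hadj).mp hu hv
  have hQQ : ∀ u v, ¬ p u → ¬ p v → ¬ G.Adj u v :=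
    fun u v hu hv hadj => hu (((hchar u v).mp hadj).mpr hv)
  let e : V × Bool ≃ V ⊕ V :=
    { toFun := fun x => if (p x.1 ↔ x.2 = true) then Sum.inl x.1 else Sum.inr x.1
      invFun := fun y => match y with
        | Sum.inl v => (v, if p v then true else false)
        | Sum.inr v => (v, if p v then false else true)
      left_inv := by rintro ⟨v, b⟩; by_cases h : p v <;> cases b <;> simp [h]
      right_inv := by rintro (v | v) <;> by_cases h : p v <;> simp [h] }
  refine ⟨⟨e, ?_⟩⟩
  rintro ⟨a, ba⟩ ⟨c, bc⟩
  show (G ⊕g G).Adj (e _) (e _) ↔ (bipartiteDouble G).Adj _ _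
  have hb : (bipartiteDouble G).Adj (a, ba) (c, bc) ↔ (G.Adj a c ∧ ba ≠ bc) := Iff.rfl
  rw [hb]
  simp only [e, Equiv.coe_fn_mk]
  by_cases ha : p a <;> by_cases hc' : p c <;> cases ba <;> cases bc <;>
    simp [ha, hc', SimpleGraph.sum_adj] <;>
    first
      | exact hPP a c ha hc'
      | exact hQQ a c ha hc'

private lemma iso_completeBipartite' {G : SimpleGraph V} {p : V → Prop}
    (hchar : ∀ u v, G.Adj u v ↔ (p u ↔ ¬ p v)) :
    ∃ n m : ℕ, Nonempty (G ≃g completeBipartiteGraph (Fin n) (Fin m)) := by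
  classical
  have hPP : ∀ u v, p u → p v → ¬ G.Adj u v :=
    fun u v hu hv hadj => ((hchar u v).mp hadj).mp hu hv
  have hQQ : ∀ u v, ¬ p u → ¬ p v → ¬ G.Adj u v :=
    fun u v hu hv hadj => hu (((hchar u v).mp hadj).mpr hv)
  have hPQ : ∀ u v, p u → ¬ p v → G.Adj u v :=
    fun u v hu hv => (hchar u v).mpr ⟨fun _ => hv, fun _ => hu⟩
  have hQP : ∀ u v, ¬ p u → p v → G.Adj u v :=
    fun u v hu hv => (hchar u v).mpr ⟨fun h => absurd h hu, fun h => absurd hv h⟩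
  refine ⟨Fintype.card {v // p v}, Fintype.card {v // ¬ p v}, ⟨?_⟩⟩
  let e2 : {v // p v} ⊕ {v // ¬ p v} ≃ Fin (Fintype.card {v // p v}) ⊕ Fin (Fintype.card {v // ¬ p v}) :=
    Equiv.sumCongr (Fintype.equivFin {v // p v}) (Fintype.equivFin {v // ¬ p v})
  refine ⟨(Equiv.sumCompl p).symm.trans e2, ?_⟩
  intro u v
  show (completeBipartiteGraph _ _).Adj (e2 ((Equiv.sumCompl p).symm u))
      (e2 ((Equiv.sumCompl p).symm v)) ↔ G.Adj u v
  by_cases hu : p u <;> by_cases hv : p v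
  · rw [Equiv.sumCompl_symm_apply_of_pos hu, Equiv.sumCompl_symm_apply_of_pos hv]
    simp only [e2, Equiv.sumCongr_apply, Sum.map_inl, completeBipartiteGraph_adj]
    simp
    exact hPP u v hu hv
  · rw [Equiv.sumCompl_symm_apply_of_pos hu, Equiv.sumCompl_symm_apply_of_neg hv]
    simp only [e2, Equiv.sumCongr_apply, Sum.map_inl, Sum.map_inr, completeBipartiteGraph_adj]
    simp
    exact hPQ u v hu hv
  · rw [Equiv.sumCompl_symm_apply_of_neg hu, Equiv.sumCompl_symm_apply_of_pos hv]
    simp only [e2, Equiv.sumCongr_apply, Sum.map_inl, Sum.map_inr, completeBipartiteGraph_adj]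
    simp
    exact hQP u v hu hv
  · rw [Equiv.sumCompl_symm_apply_of_neg hu, Equiv.sumCompl_symm_apply_of_neg hv]
    simp only [e2, Equiv.sumCongr_apply, Sum.map_inr, completeBipartiteGraph_adj]
    simp
    exact hQQ u v hu hv

end SecE
/-- if `G` is connected, has a perfect matching, and the energy of `Φ` equals
`2μ(G)`, then the bipartite double `G ⊗ K₂` is disconnected; it consists of exactly two
connected components, both isomorphic to `G` (i.e. `G ⊗ K₂ ≃g G ⊕g G`), and `G` is a
complete bipartite graph. -/
theorem bipartiteDouble_disconnected_of_gainEnergy_eq [Fintype V] [DecidableEq V]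
    (G : SimpleGraph V) (φ : V → V → ℂ) (hg : IsGain G φ)
    (hconn : G.Connected)
    (hpm : ∃ M : Finset (Sym2 V), IsGraphMatching G M ∧ ∀ v : V, ∃ e ∈ M, v ∈ e)
    (hE : gainEnergy G φ hg = 2 * (matchingNumber G : ℝ)) :
    ¬ (bipartiteDouble G).Connected ∧
      Nonempty (bipartiteDouble G ≃g (G ⊕g G)) ∧
      ∃ n m : ℕ, Nonempty (G ≃g completeBipartiteGraph (Fin n) (Fin m)) := by
  obtain ⟨p, hchar⟩ := exists_bipartition G φ hg hconn hpm hE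
  exact ⟨not_connected_bipartiteDouble' hconn.nonempty hchar,
    double_iso_sum' hchar, iso_completeBipartite' hchar⟩
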